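/- Let f : ℝⁿ → ℝ be convex and differentiable with L-Lipschitz gradient, and define x_{k+1} = x_k - (1/L)∇f(x_k). If the set of minimizers X̄ is nonempty with optimal value f̄, then f(x_k) - f̄ ≤ L·dist(x₀, X̄)²/(2k) for all k ≥ 1. -/

import Mathlib

open scoped RealInnerProductSpace

section Aux
variable {E : Type*} [NormedAddCommGroup E] [InnerProductSpace ℝ E] [CompleteSpace E]

lemma gm_line_hasDerivAt (f : E → ℝ) (f' : E → E)
    (hdiff : ∀ x : E, HasGradientAt f (f' x) x) (x v : E) (t : ℝ) :
    HasDerivAt (fun s : ℝ => f (x + s • v)) ⟪f' (x + t • v), v⟫ t := by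
  have h1 : HasDerivAt (fun s : ℝ => x + s • v) v t := by
    simpa using ((hasDerivAt_id t).smul_const v).const_add x
  have h2 : HasFDerivAt f (InnerProductSpace.toDual ℝ E (f' (x + t • v))) (x + t • v) :=
    hasGradientAt_iff_hasFDerivAt.mp (hdiff _)
  convert h2.comp_hasDerivAt t h1 using 1
  · rfl
  · rfl
  · rfl
  · rfl

lemma gm_comp_line_convex {f : E → ℝ} (hconv : ConvexOn ℝ Set.univ f) (x v : E) :
    ConvexOn ℝ Set.univ (fun t : ℝ => f (x + t • v)) := by
  refine ⟨convex_univ, fun s _ t _ a b ha hb hab => ?_⟩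
  have key : x + (a • s + b • t) • v = a • (x + s • v) + b • (x + t • v) := by
    calc x + (a • s + b • t) • v = (a + b) • x + (a • s + b • t) • v := by rw [hab, one_smul]
      _ = a • (x + s • v) + b • (x + t • v) := by
          simp only [smul_eq_mul, smul_add, add_smul, mul_smul]
          abel
  simp only [key]
  exact hconv.2 (Set.mem_univ _) (Set.mem_univ _) ha hb hab

/-- Gradient inequality for convex functions. -/
lemma gm_grad_ineq {f : E → ℝ} {f' : E → E} (hconv : ConvexOn ℝ Set.univ f)
    (hdiff : ∀ x : E, HasGradientAt f (f' x) x) (x y : E) :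
    f x + ⟪f' x, y - x⟫ ≤ f y := by
  set v := y - x with hv
  have hconvg := gm_comp_line_convex hconv x v
  have hg0 : HasDerivAt (fun s : ℝ => f (x + s • v)) ⟪f' x, v⟫ 0 := by
    simpa using gm_line_hasDerivAt f f' hdiff x v 0
  have := hconvg.le_slope_of_hasDerivAt (Set.mem_univ (0:ℝ)) (Set.mem_univ (1:ℝ))
    one_pos hg0
  have h1 := this
  rw [slope_def_field] at h1
  simp only [zero_smul, add_zero, one_smul] at h1
  have : ⟪f' x, v⟫ ≤ f (x + v) - f x := by
    simpa [div_one] using h1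
  have hxv : x + v = y := by rw [hv]; abel
  rw [hxv] at this
  linarith

/-- Descent lemma: quadratic upper bound. -/
lemma gm_descent {f : E → ℝ} {f' : E → E} {L : ℝ} (hL : 0 < L)
    (hdiff : ∀ x : E, HasGradientAt f (f' x) x)
    (hlip : ∀ x y : E, ‖f' x - f' y‖ ≤ L * ‖x - y‖) (x v : E) :
    f (x + v) ≤ f x + ⟪f' x, v⟫ + L / 2 * ‖v‖ ^ 2 := by
  set g := fun t : ℝ => f (x + t • v) with hgdef
  set h := fun t : ℝ => t * ⟪f' x, v⟫ + L * ‖v‖ ^ 2 / 2 * t ^ 2 - g t with hhdef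
  have hg : ∀ t : ℝ, HasDerivAt g ⟪f' (x + t • v), v⟫ t :=
    gm_line_hasDerivAt f f' hdiff x v
  have hh : ∀ t : ℝ, HasDerivAt h
      (⟪f' x, v⟫ + L * ‖v‖ ^ 2 / 2 * (2 * t) - ⟪f' (x + t • v), v⟫) t := by
    intro t
    have h1 : HasDerivAt (fun t : ℝ => t * ⟪f' x, v⟫) ⟪f' x, v⟫ t := by
      simpa using hasDerivAt_mul_const (⟪f' x, v⟫ : ℝ) (x := t)
    have h2 : HasDerivAt (fun t : ℝ => L * ‖v‖ ^ 2 / 2 * t ^ 2)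
        (L * ‖v‖ ^ 2 / 2 * (2 * t)) t := by
      simpa [mul_comm] using (hasDerivAt_pow 2 t).const_mul (L * ‖v‖ ^ 2 / 2)
    exact (h1.add h2).sub (hg t)
  have hmono : MonotoneOn h (Set.Icc (0:ℝ) 1) := by
    apply monotoneOn_of_hasDerivWithinAt_nonneg (convex_Icc 0 1)
      (fun t _ => (hh t).continuousAt.continuousWithinAt)
      (fun t _ => (hh t).hasDerivWithinAt)
    intro t ht
    rw [interior_Icc] at ht
    have hlb : ⟪f' (x + t • v), v⟫ - ⟪f' x, v⟫ ≤ L * t * ‖v‖ ^ 2 := by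
      have h1 : ⟪f' (x + t • v) - f' x, v⟫ ≤ ‖f' (x + t • v) - f' x‖ * ‖v‖ :=
        real_inner_le_norm _ _
      have h2 : ‖f' (x + t • v) - f' x‖ ≤ L * (t * ‖v‖) := by
        have := hlip (x + t • v) x
        simpa [norm_smul, abs_of_pos ht.1] using this
      have h3 : ‖f' (x + t • v) - f' x‖ * ‖v‖ ≤ L * (t * ‖v‖) * ‖v‖ :=
        mul_le_mul_of_nonneg_right h2 (norm_nonneg v)
      rw [inner_sub_left] at h1
      nlinarith [norm_nonneg v]
    nlinarith
  have key := hmono (Set.mem_Icc.mpr ⟨le_refl 0, zero_le_one⟩)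
    (Set.mem_Icc.mpr ⟨zero_le_one, le_refl 1⟩) zero_le_one
  have h0 : h 0 = -(f x) := by simp [hhdef, hgdef]
  have h1 : h 1 = ⟪f' x, v⟫ + L * ‖v‖ ^ 2 / 2 - f (x + v) := by simp [hhdef, hgdef]
  rw [h0, h1] at key
  linarith



/-- rate wrt a fixed minimizer -/
lemma gm_rate_fixed {f : E → ℝ} {f' : E → E} {L : ℝ} (hL : 0 < L)
    (hconv : ConvexOn ℝ Set.univ f)
    (hdiff : ∀ x : E, HasGradientAt f (f' x) x)
    (hlip : ∀ x y : E, ‖f' x - f' y‖ ≤ L * ‖x - y‖)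
    (x : ℕ → E) (hrec : ∀ k, x (k + 1) = x k - (1 / L) • f' (x k))
    (z : E) (hz : ∀ u : E, f z ≤ f u) (k : ℕ) (hk : 1 ≤ k) :
    (k : ℝ) * (f (x k) - f z) ≤ L / 2 * ‖x 0 - z‖ ^ 2 := by
  have hLne : L ≠ 0 := ne_of_gt hL
  -- descent step with explicit bound
  have step : ∀ i : ℕ, f (x (i + 1)) ≤ f (x i) - 1 / (2 * L) * ‖f' (x i)‖ ^ 2 := by
    intro i
    have h := gm_descent hL hdiff hlip (x i) (-((1 / L) • f' (x i)))
    have harg : x i + -((1 / L) • f' (x i)) = x (i + 1) := by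
      rw [hrec i]; abel
    rw [harg] at h
    have hinner : ⟪f' (x i), -((1 / L) • f' (x i))⟫ = -(1 / L) * ‖f' (x i)‖ ^ 2 := by
      rw [inner_neg_right, real_inner_smul_right, real_inner_self_eq_norm_sq]; ring
    have hnorm : ‖-((1 / L) • f' (x i))‖ ^ 2 = (1 / L) ^ 2 * ‖f' (x i)‖ ^ 2 := by
      rw [norm_neg, norm_smul]
      simp [abs_of_pos (by positivity : (0:ℝ) < 1 / L), mul_pow]
    rw [hinner, hnorm] at h
    have : L / 2 * ((1 / L) ^ 2 * ‖f' (x i)‖ ^ 2) = 1 / (2 * L) * ‖f' (x i)‖ ^ 2 := by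
      field_simp
    have hq : 1 / L * ‖f' (x i)‖ ^ 2 = 2 * (1 / (2 * L) * ‖f' (x i)‖ ^ 2) := by
      field_simp
    linarith [h, this.le]
  -- per-step bound towards z
  have key : ∀ i : ℕ, f (x (i + 1)) - f z ≤
      L / 2 * (‖x i - z‖ ^ 2 - ‖x (i + 1) - z‖ ^ 2) := by
    intro i
    have hgi := gm_grad_ineq hconv hdiff (x i) z
    have hstep := step i
    have hid : ‖x (i + 1) - z‖ ^ 2 = ‖x i - z‖ ^ 2
        - 2 * (1 / L) * ⟪x i - z, f' (x i)⟫ + (1 / L) ^ 2 * ‖f' (x i)‖ ^ 2 := by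
      have : x (i + 1) - z = (x i - z) - (1 / L) • f' (x i) := by rw [hrec i]; abel
      rw [this, norm_sub_sq_real, real_inner_smul_right, norm_smul]
      simp [abs_of_pos (by positivity : (0:ℝ) < 1 / L), mul_pow]
      ring
    have hinnercomm : ⟪f' (x i), z - x i⟫ = -⟪x i - z, f' (x i)⟫ := by
      rw [real_inner_comm, ← inner_neg_left]
      congr 1; abel
    rw [hinnercomm] at hgi
    -- f (x i) ≤ f z + ⟪x i - z, f' (x i)⟫
    have h2 : f (x (i+1)) ≤ f z + ⟪x i - z, f' (x i)⟫ - 1 / (2*L) * ‖f' (x i)‖ ^ 2 := by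
      linarith
    rw [hid]
    have hL2 : 1 / (2 * L) * ‖f' (x i)‖ ^ 2 = L / 2 * ((1/L)^2 * ‖f' (x i)‖^2) := by
      field_simp
    have hL3 : L / 2 * (2 * (1 / L) * ⟪x i - z, f' (x i)⟫) = ⟪x i - z, f' (x i)⟫ := by
      field_simp
    nlinarith [h2]
  -- telescoping
  have tele : ∑ i ∈ Finset.range k, (f (x (i + 1)) - f z) ≤ L / 2 * ‖x 0 - z‖ ^ 2 := by
    have h1 : ∑ i ∈ Finset.range k, (f (x (i + 1)) - f z) ≤
        ∑ i ∈ Finset.range k, L / 2 * (‖x i - z‖ ^ 2 - ‖x (i + 1) - z‖ ^ 2) :=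
      Finset.sum_le_sum fun i _ => key i
    have h2 : ∑ i ∈ Finset.range k, L / 2 * (‖x i - z‖ ^ 2 - ‖x (i + 1) - z‖ ^ 2)
        = L / 2 * (‖x 0 - z‖ ^ 2 - ‖x k - z‖ ^ 2) := by
      rw [← Finset.mul_sum, Finset.sum_range_sub' (fun i => ‖x i - z‖ ^ 2)]
    have h3 : L / 2 * (‖x 0 - z‖ ^ 2 - ‖x k - z‖ ^ 2) ≤ L / 2 * ‖x 0 - z‖ ^ 2 := by
      have : (0:ℝ) ≤ ‖x k - z‖ ^ 2 := by positivity
      nlinarith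
    linarith
  -- monotone decrease
  have anti : Antitone (fun n => f (x n)) := by
    apply antitone_nat_of_succ_le
    intro n
    have := step n
    have h0 : 0 ≤ 1 / (2 * L) * ‖f' (x n)‖ ^ 2 := by positivity
    linarith
  have lower : (k : ℝ) * (f (x k) - f z) ≤ ∑ i ∈ Finset.range k, (f (x (i + 1)) - f z) := by
    calc (k : ℝ) * (f (x k) - f z) = ∑ _i ∈ Finset.range k, (f (x k) - f z) := by
          rw [Finset.sum_const, Finset.card_range, nsmul_eq_mul]
      _ ≤ ∑ i ∈ Finset.range k, (f (x (i + 1)) - f z) := by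
          apply Finset.sum_le_sum
          intro i hi
          have : f (x k) ≤ f (x (i + 1)) := anti (Finset.mem_range.mp hi)
          linarith
  linarith



end Aux

theorem gradient_method_rate
    {E : Type*} [NormedAddCommGroup E] [InnerProductSpace ℝ E] [CompleteSpace E]
    (f : E → ℝ) (f' : E → E) (L : ℝ) (hL : 0 < L)
    (hconv : ConvexOn ℝ Set.univ f)
    (hdiff : ∀ x : E, HasGradientAt f (f' x) x)
    (hlip : ∀ x y : E, ‖f' x - f' y‖ ≤ L * ‖x - y‖)
    (x : ℕ → E) (hrec : ∀ k, x (k + 1) = x k - (1 / L) • f' (x k))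
    (Xbar : Set E) (hXbar : Xbar = {y : E | ∀ u : E, f y ≤ f u})
    (hne : Xbar.Nonempty)
    (fbar : ℝ) (hfbar : fbar = ⨅ y : E, f y) :
    ∀ k : ℕ, 1 ≤ k →
      f (x k) - fbar ≤ L * Metric.infDist (x 0) Xbar ^ 2 / (2 * k) := by
  intro k hk
  have hkpos : (0:ℝ) < (k : ℝ) := by exact_mod_cast hk
  have hmin : ∀ z ∈ Xbar, ∀ u : E, f z ≤ f u := by
    rw [hXbar]; exact fun z hz => hz
  have hfbar_eq : ∀ z ∈ Xbar, fbar = f z := by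
    intro z hz
    rw [hfbar]
    refine le_antisymm (ciInf_le ⟨f z, ?_⟩ z) (le_ciInf (hmin z hz))
    rintro _ ⟨u, rfl⟩
    exact hmin z hz u
  have hbound : ∀ z ∈ Xbar, f (x k) - fbar ≤ L * dist (x 0) z ^ 2 / (2 * k) := by
    intro z hz
    have h := gm_rate_fixed hL hconv hdiff hlip x hrec z (hmin z hz) k hk
    rw [hfbar_eq z hz, dist_eq_norm, le_div_iff₀ (by positivity)]
    nlinarith [h]
  set D := Metric.infDist (x 0) Xbar with hD
  set c := f (x k) - fbar with hc
  by_cases hcpos : c ≤ 0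
  · exact hcpos.trans (by positivity)
  push_neg at hcpos
  have hanonneg : 0 ≤ c * (2 * k) / L := by positivity
  have ha : ∀ z ∈ Xbar, Real.sqrt (c * (2 * k) / L) ≤ dist (x 0) z := by
    intro z hz
    have h1 : c * (2 * k) / L ≤ dist (x 0) z ^ 2 := by
      have h2 := mul_le_mul_of_nonneg_right (hbound z hz)
        (le_of_lt (by positivity : (0:ℝ) < 2 * k))
      rw [div_mul_cancel₀ _ (by positivity : (2 : ℝ) * k ≠ 0)] at h2
      rw [div_le_iff₀ hL]
      nlinarith [h2]
    calc Real.sqrt (c * (2 * k) / L) ≤ Real.sqrt (dist (x 0) z ^ 2) :=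
          Real.sqrt_le_sqrt h1
      _ = dist (x 0) z := Real.sqrt_sq dist_nonneg
  have hDle : Real.sqrt (c * (2 * k) / L) ≤ D := by
    rw [hD, Metric.infDist_eq_iInf]
    haveI : Nonempty Xbar := hne.to_subtype
    exact le_ciInf fun z => ha z z.2
  have h2 : c * (2 * k) / L ≤ D ^ 2 := by
    have h3 := pow_le_pow_left₀ (Real.sqrt_nonneg _) hDle 2
    rwa [Real.sq_sqrt hanonneg] at h3
  rw [le_div_iff₀ (by positivity)]
  have h4 := mul_le_mul_of_nonneg_right h2 hL.le
  rw [div_mul_cancel₀ _ (ne_of_gt hL)] at h4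
  nlinarith [h4]
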